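/- Suppose dim_ℂ S = 4 and dim_ℂ R = 4. Let Q = s ⊗ r with s ≠ 0 and r ≠ 0 (a minimal supercharge), and set K = {r' ∈ R : ω(r, r') = 0}. Then the kernel of the linear map β(Q, −) : S ⊗ R → ⋀²S equals the sum of the two subspaces S ⊗ K and (ℂ·s) ⊗ R (the ranges of the canonical maps S ⊗ K → S ⊗ R and (ℂ·s) ⊗ R → S ⊗ R), and this kernel has dimension 13. (This is the linear-algebraic content of the paper's remark that at a holomorphic supercharge the tangent space to the projectivized nilpotence variety of the N=(2,0) algebra is 12-dimensional, larger than at nonminimal points where the corresponding kernel is 11-dimensional, so that the rank-one locus is the singular locus.) -/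

import Mathlib

open TensorProduct ExteriorAlgebra

/-- The wedge `s ∧ t` as an element of the second exterior power `⋀[ℂ]^2 S`. -/
noncomputable def wedge {S : Type} [AddCommGroup S] [Module ℂ S] (s t : S) : ⋀[ℂ]^2 S :=
  ⟨ι ℂ s * ι ℂ t, by
    show _ ∈ LinearMap.range (ι ℂ : S →ₗ[ℂ] ExteriorAlgebra ℂ S) ^ 2
    rw [pow_two]
    exact Submodule.mul_mem_mul (LinearMap.mem_range_self _ s) (LinearMap.mem_range_self _ t)⟩


lemma ιMulti_two {S : Type} [AddCommGroup S] [Module ℂ S] (s z : S) :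
    ιMulti ℂ 2 ![s, z] = ι ℂ s * ι ℂ z := by
  rw [ιMulti_apply]
  simp [List.ofFn_succ]

lemma wedge_eq_zero_iff {S : Type} [AddCommGroup S] [Module ℂ S] (s z : S) (hs : s ≠ 0) :
    wedge s z = 0 ↔ z ∈ Submodule.span ℂ {s} := by
  constructor
  · intro h
    by_contra hz
    have hz0 : z ≠ 0 := fun h0 => hz (h0 ▸ Submodule.zero_mem _)
    have hli : LinearIndependent ℂ ![s, z] := by
      rw [linearIndependent_fin2]
      refine ⟨hz0, fun a ha => ?_⟩
      simp only [Matrix.cons_val_zero, Matrix.cons_val_one, Matrix.head_cons] at ha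
      have ha0 : a ≠ 0 := fun h0 => hs (by rw [← ha, h0, zero_smul])
      exact hz (Submodule.mem_span_singleton.2 ⟨a⁻¹, by rw [← ha, smul_smul, inv_mul_cancel₀ ha0, one_smul]⟩)
    have hsz : s ≠ z := fun hsz => by
      have := hli.injective (show ![s, z] 0 = ![s, z] 1 by simp [hsz])
      simp at this
    have hli' : LinearIndepOn ℂ id (Set.range ![s, z]) := (linearIndepOn_id_range_iff hli.injective).mpr hli
    set b := Module.Basis.extend hli' with hb
    have hsmem : s ∈ hli'.extend (Set.subset_univ _) :=
      hli'.subset_extend _ ⟨0, by simp⟩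
    have hzmem : z ∈ hli'.extend (Set.subset_univ _) :=
      hli'.subset_extend _ ⟨1, by simp⟩
    set is : hli'.extend (Set.subset_univ _) := ⟨s, hsmem⟩
    set iz : hli'.extend (Set.subset_univ _) := ⟨z, hzmem⟩
    have hne : is ≠ iz := fun h => hsz (congrArg Subtype.val h)
    set φ : S →ₗ[ℂ] ℂ := b.coord is
    set ψ : S →ₗ[ℂ] ℂ := b.coord iz
    have hφs : φ s = 1 := by
      have : b is = s := Module.Basis.extend_apply_self hli' is
      rw [show s = b is from this.symm]
      simp [φ, Module.Basis.coord_apply, Module.Basis.repr_self]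
    have hψz : ψ z = 1 := by
      have : b iz = z := Module.Basis.extend_apply_self hli' iz
      rw [show z = b iz from this.symm]
      simp [ψ, Module.Basis.coord_apply, Module.Basis.repr_self]
    have hφz : φ z = 0 := by
      have : b iz = z := Module.Basis.extend_apply_self hli' iz
      rw [show z = b iz from this.symm]
      simp [φ, Module.Basis.coord_apply, Module.Basis.repr_self, Finsupp.single_eq_of_ne' hne.symm]
    have hψs : ψ s = 0 := by
      have : b is = s := Module.Basis.extend_apply_self hli' is
      rw [show s = b is from this.symm]
      simp [ψ, Module.Basis.coord_apply, Module.Basis.repr_self, Finsupp.single_eq_of_ne' hne]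
    set L : S →ₗ[ℂ] (Fin 2 → ℂ) := LinearMap.pi ![φ, ψ]
    set B : S [⋀^Fin 2]→ₗ[ℂ] ℂ := ((Pi.basisFun ℂ (Fin 2)).det).compLinearMap L
    have hB : B ![s, z] = 1 := by
      simp only [B, AlternatingMap.compLinearMap_apply, Module.Basis.det_apply]
      rw [Matrix.det_fin_two]
      simp [Module.Basis.toMatrix_apply, L, LinearMap.pi_apply, hφs, hψz, hφz, hψs]
    set f : ∀ i, S [⋀^Fin i]→ₗ[ℂ] ℂ :=
      Function.update (fun i => (0 : S [⋀^Fin i]→ₗ[ℂ] ℂ)) 2 B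
    have hval : ι ℂ s * ι ℂ z = 0 := by
      have := congrArg Subtype.val h
      simpa [wedge] using this
    have h1 : liftAlternating f (ι ℂ s * ι ℂ z) = 1 := by
      rw [← ιMulti_two, liftAlternating_apply_ιMulti]
      simp [f, hB]
    rw [hval, map_zero] at h1
    exact one_ne_zero h1.symm
  · intro h
    obtain ⟨c, rfl⟩ := Submodule.mem_span_singleton.1 h
    apply Subtype.ext
    show ι ℂ s * ι ℂ (c • s) = _
    rw [map_smul, mul_smul_comm, ι_sq_zero, smul_zero]
    rfl

/-- Suppose `dim_ℂ S = 4` and `dim_ℂ R = 4`, and let `Q = s ⊗ r` be a minimal supercharge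
(`s ≠ 0`, `r ≠ 0`).  With `K = {r' : ω r r' = 0}`, the kernel of `β (Q, -) : S ⊗ R → ⋀²S`
equals `S ⊗ K + (ℂ·s) ⊗ R` and is 13-dimensional: the tangent space to the nilpotence variety
of the `N=(2,0)` algebra is larger at a minimal supercharge than at a nonminimal one (where
the corresponding kernel is 11-dimensional), so the rank-one locus is the singular locus. -/
theorem minimal_supercharge_kernel_is_thirteen_dimensional
    {S R : Type} [AddCommGroup S] [Module ℂ S] [FiniteDimensional ℂ S]
    [AddCommGroup R] [Module ℂ R] [FiniteDimensional ℂ R]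
    (hS : Module.finrank ℂ S = 4) (hR : Module.finrank ℂ R = 4)
    (ω : R →ₗ[ℂ] R →ₗ[ℂ] ℂ)
    (halt : ∀ r : R, ω r r = 0)
    (hnd : ∀ r : R, (∀ r' : R, ω r r' = 0) → r = 0)
    (β : (S ⊗[ℂ] R) →ₗ[ℂ] (S ⊗[ℂ] R) →ₗ[ℂ] ⋀[ℂ]^2 S)
    (hβ : ∀ (s s' : S) (r r' : R),
      β (s ⊗ₜ[ℂ] r) (s' ⊗ₜ[ℂ] r') = ω r r' • wedge s s')
    (s : S) (r : R) (hs : s ≠ 0) (hr : r ≠ 0) :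
    LinearMap.ker (β (s ⊗ₜ[ℂ] r)) =
      LinearMap.range
          (TensorProduct.map (LinearMap.id : S →ₗ[ℂ] S) (LinearMap.ker (ω r)).subtype) ⊔
        LinearMap.range
          (TensorProduct.map (Submodule.span ℂ {s}).subtype (LinearMap.id : R →ₗ[ℂ] R)) ∧
    Module.finrank ℂ ↥(LinearMap.ker (β (s ⊗ₜ[ℂ] r))) = 13 := by
  classical
  -- find r' with ω r r' = 1
  obtain ⟨r₀, hr₀⟩ : ∃ r₀, ω r r₀ ≠ 0 := by
    by_contra hc
    push_neg at hc
    exact hr (hnd r hc)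
  set r' : R := (ω r r₀)⁻¹ • r₀ with hr'def
  have hrr' : ω r r' = 1 := by
    rw [hr'def, map_smul, smul_eq_mul, inv_mul_cancel₀ hr₀]
  -- the wedge-with-s linear map
  set w : S →ₗ[ℂ] ⋀[ℂ]^2 S :=
    LinearMap.codRestrict (⋀[ℂ]^2 S) ((LinearMap.mulLeft ℂ (ι ℂ s)) ∘ₗ ι ℂ)
      (fun z => (wedge s z).2) with hwdef
  have hw : ∀ z, w z = wedge s z := fun z => Subtype.ext rfl
  -- the contraction map
  set g : S ⊗[ℂ] R →ₗ[ℂ] S :=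
    TensorProduct.lift (((LinearMap.lsmul ℂ S) ∘ₗ (ω r)).flip) with hgdef
  have hg : ∀ (s' : S) (r'' : R), g (s' ⊗ₜ[ℂ] r'') = ω r r'' • s' := by
    intro s' r''
    simp [hgdef]
  set f : S ⊗[ℂ] R →ₗ[ℂ] ⋀[ℂ]^2 S := β (s ⊗ₜ[ℂ] r) with hfdef
  have hfw : f = w ∘ₗ g := by
    apply TensorProduct.ext'
    intro s' r''
    rw [LinearMap.comp_apply, hg, map_smul, hw, hfdef, hβ]
  -- kernel of w
  have hkerw : LinearMap.ker w = Submodule.span ℂ {s} := by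
    ext z
    rw [LinearMap.mem_ker, hw, wedge_eq_zero_iff s z hs]
  -- g is surjective
  have hgsurj : LinearMap.range g = ⊤ := by
    rw [LinearMap.range_eq_top]
    intro s'
    exact ⟨s' ⊗ₜ[ℂ] r', by rw [hg, hrr', one_smul]⟩
  -- range of f
  have hrange : LinearMap.range f = LinearMap.range w := by
    rw [hfw, LinearMap.range_comp, hgsurj, Submodule.map_top]
  -- dimension count
  have hrkw : Module.finrank ℂ (LinearMap.range w) = 3 := by
    have h1 := LinearMap.finrank_range_add_finrank_ker w
    rw [hkerw, finrank_span_singleton hs, hS] at h1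
    omega
  have hdim : Module.finrank ℂ (LinearMap.ker f) = 13 := by
    have h1 := LinearMap.finrank_range_add_finrank_ker f
    rw [hrange, hrkw, Module.finrank_tensorProduct, hS, hR] at h1
    omega
  -- kernel containments
  set K := LinearMap.ker (ω r) with hKdef
  have hsup_le : LinearMap.range (TensorProduct.map (LinearMap.id : S →ₗ[ℂ] S) K.subtype) ⊔
      LinearMap.range (TensorProduct.map (Submodule.span ℂ {s}).subtype (LinearMap.id : R →ₗ[ℂ] R))
      ≤ LinearMap.ker f := by
    apply sup_le
    · rw [LinearMap.range_le_ker_iff]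
      apply TensorProduct.ext'
      intro s' k
      rw [LinearMap.comp_apply, TensorProduct.map_tmul]
      simp only [LinearMap.id_coe, id_eq, Submodule.coe_subtype, hfdef]
      rw [hβ]
      have : ω r (k : R) = 0 := k.2
      rw [this, zero_smul]
      rfl
    · rw [LinearMap.range_le_ker_iff]
      apply TensorProduct.ext'
      intro σ r''
      rw [LinearMap.comp_apply, TensorProduct.map_tmul]
      simp only [LinearMap.id_coe, id_eq, Submodule.coe_subtype, hfdef]
      rw [hβ]
      have : wedge s (σ : S) = 0 := (wedge_eq_zero_iff s σ hs).2 σ.2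
      rw [this, smul_zero]
      rfl
  -- decomposition
  set p : R →ₗ[ℂ] R := LinearMap.id - (LinearMap.toSpanSingleton ℂ R r') ∘ₗ (ω r) with hpdef
  have hpK : ∀ r'', p r'' ∈ K := by
    intro r''
    rw [hKdef, LinearMap.mem_ker, hpdef]
    simp only [LinearMap.sub_apply, LinearMap.id_apply, LinearMap.comp_apply,
      LinearMap.toSpanSingleton_apply, map_sub, map_smul, hrr']
    simp
  set πK : R →ₗ[ℂ] K := LinearMap.codRestrict K p hpK with hπdef
  have hdecomp : (LinearMap.id : S ⊗[ℂ] R →ₗ[ℂ] S ⊗[ℂ] R) =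
      (TensorProduct.map LinearMap.id K.subtype) ∘ₗ (TensorProduct.map LinearMap.id πK) +
      ((TensorProduct.mk ℂ S R).flip r') ∘ₗ g := by
    apply TensorProduct.ext'
    intro s' r''
    rw [LinearMap.id_apply, LinearMap.add_apply, LinearMap.comp_apply, LinearMap.comp_apply,
      TensorProduct.map_tmul, TensorProduct.map_tmul, hg, LinearMap.flip_apply,
      TensorProduct.mk_apply]
    show s' ⊗ₜ[ℂ] r'' = s' ⊗ₜ[ℂ] ((πK r'' : R)) + (ω r r'' • s') ⊗ₜ[ℂ] r'
    have hπ : ((πK r'' : R)) = r'' - ω r r'' • r' := by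
      simp [hπdef, hpdef]
    rw [hπ, TensorProduct.smul_tmul, ← TensorProduct.tmul_add, sub_add_cancel]
  have hker_le : LinearMap.ker f ≤
      LinearMap.range (TensorProduct.map (LinearMap.id : S →ₗ[ℂ] S) K.subtype) ⊔
      LinearMap.range (TensorProduct.map (Submodule.span ℂ {s}).subtype
        (LinearMap.id : R →ₗ[ℂ] R)) := by
    intro x hx
    rw [LinearMap.mem_ker] at hx
    have hgx : g x ∈ Submodule.span ℂ {s} := by
      rw [← hkerw, LinearMap.mem_ker, ← LinearMap.comp_apply, ← hfw, hx]
    have hx' : x = (TensorProduct.map LinearMap.id K.subtype)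
        ((TensorProduct.map LinearMap.id πK) x) + (g x) ⊗ₜ[ℂ] r' := by
      conv_lhs => rw [← LinearMap.id_apply (R := ℂ) x, hdecomp]
      rfl
    rw [hx']
    apply Submodule.add_mem
    · exact Submodule.mem_sup_left (LinearMap.mem_range_self _ _)
    · apply Submodule.mem_sup_right
      exact ⟨(⟨g x, hgx⟩ : Submodule.span ℂ {s}) ⊗ₜ[ℂ] r', by
        rw [TensorProduct.map_tmul]; rfl⟩
  exact ⟨le_antisymm hker_le hsup_le, hdim⟩
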